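/- Let A be an abelian category, n ≥ 1, and 0 ≤ i < n. Let σ_i: [n] → [n-1] be the monotone surjection with σ_i(i) = σ_i(i+1), and let Ar(σ_i): Ar[n] → Ar[n-1] be the induced map of posets, (j,j') ↦ (σ_i(j), σ_i(j')). Then precomposition with Ar(σ_i) defines a functor W_{n-1}(A) → W_n(A) which is fully faithful, and whose essential image consists exactly of those F ∈ W_n(A) for which F(i,i+1) is a zero object. -/

import Mathlib

open CategoryTheory CategoryTheory.Limits

/-- The poset `Ar[n]` of pairs `(i,j)` with `0 ≤ i ≤ j ≤ n`, ordered componentwise. -/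
abbrev ArPos (n : ℕ) := {p : Fin (n+1) × Fin (n+1) // p.1 ≤ p.2}

/-- The morphism of `Ar[n]` from `(i,j)` to `(i',j')` when `i ≤ i'` and `j ≤ j'`. -/
def arLe {n : ℕ} {i j i' j' : Fin (n+1)} (hij : i ≤ j) (hi'j' : i' ≤ j')
    (h1 : i ≤ i') (h2 : j ≤ j') :
    (⟨(i, j), hij⟩ : ArPos n) ⟶ ⟨(i', j'), hi'j'⟩ :=
  homOfLE (Subtype.mk_le_mk.mpr (Prod.mk_le_mk.mpr ⟨h1, h2⟩))

/-- The condition defining `W_n(A)` inside `Fun(Ar[n], A)`: each `F(i,i)` is a zero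
object, and for every pair `(i,j) ≤ (i',j')` in `Ar[n]` (with all four corners in
`Ar[n]`) the square with vertices `F(i,j), F(i,j'), F(i',j), F(i',j')` is both a
pullback and a pushout. -/
def WCond {A : Type*} [Category A] (n : ℕ) (F : ArPos n ⥤ A) : Prop :=
  (∀ i : Fin (n+1), IsZero (F.obj ⟨(i, i), le_rfl⟩)) ∧
  (∀ (i i' j j' : Fin (n+1)) (h1 : i ≤ i') (h2 : i' ≤ j) (h3 : j ≤ j'),
    IsPullback
        (F.map (arLe (h1.trans h2) ((h1.trans h2).trans h3) le_rfl h3))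
        (F.map (arLe (h1.trans h2) h2 h1 le_rfl))
        (F.map (arLe ((h1.trans h2).trans h3) (h2.trans h3) h1 le_rfl))
        (F.map (arLe h2 (h2.trans h3) le_rfl h3)) ∧
    IsPushout
        (F.map (arLe (h1.trans h2) ((h1.trans h2).trans h3) le_rfl h3))
        (F.map (arLe (h1.trans h2) h2 h1 le_rfl))
        (F.map (arLe ((h1.trans h2).trans h3) (h2.trans h3) h1 le_rfl))
        (F.map (arLe h2 (h2.trans h3) le_rfl h3)))

/-- The category `W_n(A)` of diagrams arising in level `n` of Waldhausen's
`S`-construction of `A`. -/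
abbrev W (A : Type*) [Category A] (n : ℕ) := ObjectProperty.FullSubcategory (WCond (A := A) n)

/-- The map `Ar(σ_i) : Ar[n] → Ar[n-1]` (with `n = m+1`) induced by the monotone
surjection `σ_i : [m+1] → [m]` identifying `i` and `i+1`, given by `Fin.predAbove i`. -/
def arSigma (m : ℕ) (i : Fin (m+1)) (p : ArPos (m+1)) : ArPos m :=
  ⟨(i.predAbove p.val.1, i.predAbove p.val.2),
    Fin.predAbove_right_monotone i p.property⟩

lemma arSigma_monotone (m : ℕ) (i : Fin (m+1)) : Monotone (arSigma m i) :=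
  fun p q h => Subtype.mk_le_mk.mpr
    (Prod.mk_le_mk.mpr
      ⟨Fin.predAbove_right_monotone i (Prod.le_def.mp (Subtype.coe_le_coe.mpr h)).1,
       Fin.predAbove_right_monotone i (Prod.le_def.mp (Subtype.coe_le_coe.mpr h)).2⟩)

/-- The functor `Ar[n] ⥤ Ar[n-1]` induced by `σ_i`. -/
def arSigmaFunctor (m : ℕ) (i : Fin (m+1)) : ArPos (m+1) ⥤ ArPos m :=
  (arSigma_monotone m i).functor

/-! ### Auxiliary lemmas -/

section Aux
variable {A : Type*} [Category A]

lemma map_eq_eqToHom {P : Type*} [Preorder P] (F : P ⥤ A) {p q : P} (h : p = q) (f : p ⟶ q) :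
    F.map f = eqToHom (congrArg F.obj h) := by
  subst h; rw [Subsingleton.elim f (𝟙 p)]; simp

lemma map_eq' {P : Type*} [Preorder P] (F : P ⥤ A) {p q q' : P} (f : p ⟶ q) (h : q' = q)
    (f' : p ⟶ q') : F.map f = F.map f' ≫ eqToHom (congrArg F.obj h) := by
  subst h; rw [Subsingleton.elim f f']; simp

lemma isIso_of_isZero {X Y : A} (hX : IsZero X) (hY : IsZero Y) (f : X ⟶ Y) : IsIso f :=
  ⟨hY.to_ X, hX.eq_of_src _ _, hY.eq_of_src _ _⟩

lemma isIso_of_isPushout {Z X Y P : A} (hZ : IsZero Z) (hY : IsZero Y)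
    {f : Z ⟶ X} {g : Z ⟶ Y} {h : X ⟶ P} {k : Y ⟶ P} (hp : IsPushout f g h k) : IsIso h := by
  refine ⟨hp.desc (𝟙 X) (hY.to_ X) (hZ.eq_of_src _ _), hp.inl_desc _ _ _,
    hp.hom_ext ?_ (hY.eq_of_src _ _)⟩
  rw [← Category.assoc, hp.inl_desc]; simp

lemma isIso_of_isPullback {P X Y Z : A} (hY : IsZero Y) (hZ : IsZero Z)
    {fst : P ⟶ X} {snd : P ⟶ Y} {f : X ⟶ Z} {g : Y ⟶ Z} (hp : IsPullback fst snd f g) :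
    IsIso fst := by
  refine ⟨hp.lift (𝟙 X) (hY.from_ X) (hZ.eq_of_tgt _ _), hp.hom_ext ?_ (hY.eq_of_tgt _ _),
    hp.lift_fst _ _ _⟩
  rw [Category.assoc, hp.lift_fst]; simp

def arMapMono {n k : ℕ} {f : Fin (n+1) → Fin (k+1)} (hf : Monotone f) :
    Monotone (fun p : ArPos n => (⟨(f p.1.1, f p.1.2), hf p.2⟩ : ArPos k)) :=
  fun _ _ h => Subtype.mk_le_mk.mpr
    (Prod.mk_le_mk.mpr ⟨hf (Prod.le_def.mp h).1, hf (Prod.le_def.mp h).2⟩)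

def arFun {n k : ℕ} {f : Fin (n+1) → Fin (k+1)} (hf : Monotone f) : ArPos n ⥤ ArPos k :=
  (arMapMono hf).functor

lemma wcond_comp {n k : ℕ} {f : Fin (n+1) → Fin (k+1)} (hf : Monotone f)
    {F : ArPos k ⥤ A} (hF : WCond k F) : WCond n (arFun hf ⋙ F) := by
  constructor
  · intro j; exact hF.1 (f j)
  · intro i i' j j' h1 h2 h3
    have := hF.2 (f i) (f i') (f j) (f j') (hf h1) (hf h2) (hf h3)
    exact ⟨by convert this.1 using 1 <;> rfl, by convert this.2 using 1 <;> rfl⟩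

lemma iso_row {k : ℕ} {F : ArPos k ⥤ A} (hF : WCond k F) (x y b : Fin (k+1))
    (hxy : x ≤ y) (hyb : y ≤ b) (hZ : IsZero (F.obj ⟨(x, y), hxy⟩)) :
    IsIso (F.map (arLe (hxy.trans hyb) hyb hxy le_rfl)) := by
  have hp := (hF.2 x y y b hxy le_rfl hyb).2
  have : IsIso (F.map (arLe ((hxy.trans le_rfl).trans hyb) (le_rfl.trans hyb) hxy le_rfl)) :=
    isIso_of_isPushout hZ (hF.1 y) hp
  rwa [show (arLe (hxy.trans hyb) hyb hxy le_rfl) =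
    (arLe ((hxy.trans le_rfl).trans hyb) (le_rfl.trans hyb) hxy le_rfl) from
    Subsingleton.elim _ _]

lemma iso_col {k : ℕ} {F : ArPos k ⥤ A} (hF : WCond k F) (a x y : Fin (k+1))
    (hax : a ≤ x) (hxy : x ≤ y) (hZ : IsZero (F.obj ⟨(x, y), hxy⟩)) :
    IsIso (F.map (arLe hax (hax.trans hxy) le_rfl hxy)) := by
  have hp := (hF.2 a x x y hax le_rfl hxy).1
  have : IsIso (F.map (arLe (hax.trans le_rfl) ((hax.trans le_rfl).trans hxy) le_rfl hxy)) :=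
    isIso_of_isPullback (hF.1 x) hZ hp
  rwa [show (arLe hax (hax.trans hxy) le_rfl hxy) =
    (arLe (hax.trans le_rfl) ((hax.trans le_rfl).trans hxy) le_rfl hxy) from
    Subsingleton.elim _ _]

end Aux

/-- Let `A` be abelian, `n = m+1 ≥ 1` and `0 ≤ i < n` (i.e.
`i : Fin (m+1)`). Precomposition with `Ar(σ_i)` defines a functor
`W_{n-1}(A) → W_n(A)`; it is fully faithful, and its essential image consists exactly of
those `F ∈ W_n(A)` for which `F(i,i+1)` is a zero object. -/
theorem statement11 (A : Type*) [Category A] [Abelian A] (m : ℕ) (i : Fin (m+1)) :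
    ∃ G : W A m ⥤ W A (m+1),
      G ⋙ ObjectProperty.ι _ =
        ObjectProperty.ι _ ⋙
          (Functor.whiskeringLeft (ArPos (m+1)) (ArPos m) A).obj (arSigmaFunctor m i) ∧
      G.Full ∧ G.Faithful ∧
      (∀ F : W A (m+1),
        G.essImage F ↔
          IsZero (F.obj.obj ⟨(i.castSucc, i.succ), (Fin.castSucc_lt_succ (i := i)).le⟩)) := by

  classical
  have dmono : Monotone (i.castSucc.succAbove) := (Fin.strictMono_succAbove i.castSucc).monotone
  let δF : ArPos m ⥤ ArPos (m+1) := arFun dmono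
  let σF : ArPos (m+1) ⥤ ArPos m := arSigmaFunctor m i
  have sd : ∀ j : Fin (m+1), i.predAbove (i.castSucc.succAbove j) = j :=
    Fin.predAbove_succAbove i
  have sdo : ∀ r : ArPos m, σF.obj (δF.obj r) = r := fun r =>
    Subtype.ext (Prod.ext (sd r.1.1) (sd r.1.2))
  have e0 : i.castSucc.succAbove (i.predAbove i.castSucc) = i.succ := by
    rw [Fin.predAbove_castSucc_self, Fin.succAbove_castSucc_self]
  have dsle : ∀ a : Fin (m+2), a ≤ i.castSucc.succAbove (i.predAbove a) := by
    intro a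
    by_cases h : a = i.castSucc
    · subst h; rw [e0]; exact (Fin.castSucc_lt_succ (i := i)).le
    · rw [Fin.succAbove_predAbove h]
  have dso : ∀ p : ArPos (m+1), p ≤ δF.obj (σF.obj p) := fun p =>
    Subtype.mk_le_mk.mpr (Prod.mk_le_mk.mpr ⟨dsle p.1.1, dsle p.1.2⟩)
  have comp_eq : δF ⋙ σF = 𝟭 (ArPos m) :=
    CategoryTheory.Functor.ext (fun r => sdo r) (fun _ _ f => Subsingleton.elim _ _)
  let Φ : W A m ⥤ (ArPos (m+1) ⥤ A) :=
    ObjectProperty.ι _ ⋙ (Functor.whiskeringLeft (ArPos (m+1)) (ArPos m) A).obj (arSigmaFunctor m i)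
  have hΦ : ∀ X : W A m, WCond (m+1) (Φ.obj X) := fun X =>
    wcond_comp (f := i.predAbove) (Fin.predAbove_right_monotone i) X.property
  refine ⟨ObjectProperty.lift _ Φ hΦ, rfl, ?_, ?_, ?_⟩
  · -- Full
    refine ⟨fun {X Y} α => ?_⟩
    let α' : σF ⋙ X.obj ⟶ σF ⋙ Y.obj := α.hom
    have hX : X.obj = δF ⋙ (σF ⋙ X.obj) := by
      rw [← Functor.assoc, comp_eq, Functor.id_comp]
    have hY : Y.obj = δF ⋙ (σF ⋙ Y.obj) := by
      rw [← Functor.assoc, comp_eq, Functor.id_comp]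
    refine ⟨ObjectProperty.homMk (eqToHom hX ≫ Functor.whiskerLeft δF α' ≫ eqToHom hY.symm : X.obj ⟶ Y.obj), ?_⟩
    apply InducedCategory.hom_ext
    show Functor.whiskerLeft σF (eqToHom hX ≫ Functor.whiskerLeft δF α' ≫ eqToHom hY.symm) = α'
    apply NatTrans.ext
    funext p
    have f : p ⟶ δF.obj (σF.obj p) := homOfLE (dso p)
    have hq : σF.obj p = σF.obj (δF.obj (σF.obj p)) := (sdo (σF.obj p)).symm
    have nat := α'.naturality f
    rw [show (σF ⋙ X.obj).map f = eqToHom (congrArg X.obj.obj hq) from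
          map_eq_eqToHom X.obj hq (σF.map f),
        show (σF ⋙ Y.obj).map f = eqToHom (congrArg Y.obj.obj hq) from
          map_eq_eqToHom Y.obj hq (σF.map f)] at nat
    have nat' : α'.app (δF.obj (σF.obj p)) =
        eqToHom (congrArg X.obj.obj hq).symm ≫ α'.app p ≫ eqToHom (congrArg Y.obj.obj hq) := by
      rw [← nat]; simp
    show (eqToHom hX ≫ Functor.whiskerLeft δF α' ≫ eqToHom hY.symm).app (σF.obj p) = α'.app p
    simp only [NatTrans.comp_app, Functor.whiskerLeft_app, eqToHom_app]
    rw [nat']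
    simp
  · -- Faithful
    refine ⟨fun {X Y} β1 β2 h => ?_⟩
    apply InducedCategory.hom_ext
    show (β1.hom : X.obj ⟶ Y.obj) = (β2.hom : X.obj ⟶ Y.obj)
    apply NatTrans.ext
    funext r
    have hc : (β1.hom : X.obj ⟶ Y.obj).app (σF.obj (δF.obj r)) =
        (β2.hom : X.obj ⟶ Y.obj).app (σF.obj (δF.obj r)) :=
      congrArg (fun t : ((ObjectProperty.lift _ Φ hΦ).obj X ⟶ (ObjectProperty.lift _ Φ hΦ).obj Y) => t.hom.app (δF.obj r)) h
    rwa [sdo r] at hc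
  · -- essential image
    intro F
    constructor
    · rintro ⟨X, ⟨e⟩⟩
      have hz : IsZero (X.obj.obj ⟨(i, i), le_rfl⟩) := X.property.1 i
      have hobj : σF.obj ⟨(i.castSucc, i.succ), (Fin.castSucc_lt_succ (i := i)).le⟩ =
          (⟨(i, i), le_rfl⟩ : ArPos m) :=
        Subtype.ext (Prod.ext (Fin.predAbove_castSucc_self i) (Fin.predAbove_succ_self i))
      have h0 : IsZero (X.obj.obj (σF.obj ⟨(i.castSucc, i.succ), (Fin.castSucc_lt_succ (i := i)).le⟩)) := by
        rw [hobj]; exact hz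
      have e' := (ObjectProperty.ι (WCond (A := A) (m+1))).mapIso e
      exact IsZero.of_iso h0 ((e'.app ⟨(i.castSucc, i.succ), (Fin.castSucc_lt_succ (i := i)).le⟩).symm)
    · intro hz
      have keyIso : ∀ p : ArPos (m+1), IsIso (F.obj.map (homOfLE (dso p))) := by
        rintro ⟨⟨a, b⟩, hab⟩
        by_cases ha : a = i.castSucc <;> by_cases hb : b = i.castSucc
        · -- a = b = castSucc i
          subst ha; subst hb
          have ht : δF.obj (σF.obj ⟨(i.castSucc, i.castSucc), hab⟩) =
              (⟨(i.succ, i.succ), le_rfl⟩ : ArPos (m+1)) := Subtype.ext (Prod.ext e0 e0)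
          have htz : IsZero (F.obj.obj (δF.obj (σF.obj ⟨(i.castSucc, i.castSucc), hab⟩))) := by
            rw [ht]; exact F.property.1 i.succ
          exact isIso_of_isZero (F.property.1 i.castSucc) htz _
        · -- a = castSucc i, b ≠ castSucc i
          subst ha
          have hsb : i.succ ≤ b := Fin.castSucc_lt_iff_succ_le.mp (lt_of_le_of_ne hab (Ne.symm hb))
          have ht : δF.obj (σF.obj ⟨(i.castSucc, b), hab⟩) =
              (⟨(i.succ, b), hsb⟩ : ArPos (m+1)) :=
            Subtype.ext (Prod.ext e0 (Fin.succAbove_predAbove hb))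
          rw [map_eq' F.obj (homOfLE (dso ⟨(i.castSucc, b), hab⟩)) ht.symm
            (arLe (((Fin.castSucc_lt_succ (i := i)).le).trans hsb) hsb (Fin.castSucc_lt_succ (i := i)).le le_rfl)]
          haveI := iso_row F.property i.castSucc i.succ b (Fin.castSucc_lt_succ (i := i)).le hsb hz
          infer_instance
        · -- a ≠ castSucc i, b = castSucc i
          subst hb
          have ht : δF.obj (σF.obj ⟨(a, i.castSucc), hab⟩) =
              (⟨(a, i.succ), hab.trans (Fin.castSucc_lt_succ (i := i)).le⟩ : ArPos (m+1)) :=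
            Subtype.ext (Prod.ext (Fin.succAbove_predAbove ha) e0)
          rw [map_eq' F.obj (homOfLE (dso ⟨(a, i.castSucc), hab⟩)) ht.symm
            (arLe hab (hab.trans (Fin.castSucc_lt_succ (i := i)).le) le_rfl (Fin.castSucc_lt_succ (i := i)).le)]
          haveI := iso_col F.property a i.castSucc i.succ hab (Fin.castSucc_lt_succ (i := i)).le hz
          infer_instance
        · -- neither
          have ht : δF.obj (σF.obj ⟨(a, b), hab⟩) = (⟨(a, b), hab⟩ : ArPos (m+1)) :=
            Subtype.ext (Prod.ext (Fin.succAbove_predAbove ha) (Fin.succAbove_predAbove hb))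
          rw [map_eq_eqToHom F.obj ht.symm (homOfLE (dso ⟨(a, b), hab⟩))]
          infer_instance
      let ι : F.obj ≅ (σF ⋙ (δF ⋙ F.obj)) := NatIso.ofComponents
        (fun p => @asIso _ _ _ _ _ (keyIso p))
        (fun {p q} f => by
          dsimp
          rw [← F.obj.map_comp, ← F.obj.map_comp]
          exact congrArg F.obj.map (Subsingleton.elim _ _))
      exact ⟨⟨δF ⋙ F.obj, wcond_comp dmono F.property⟩,
        ⟨(ObjectProperty.ι _).preimageIso ι.symm⟩⟩
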